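/- In the abstract setting (U Hilbert, a continuous coercive symmetric bilinear form, pⱼ ∈ U*, Zⱼ ∈ ℝ, the hard-constraint set nonempty), let u^δ be the penalised solution and u the hard-constrained solution. Then there is a constant C > 0, independent of δ, such that ‖u − u^δ‖_U ≤ C√δ for all δ > 0. -/
import Mathlib

set_option maxHeartbeats 1000000 in
/-- Penalty convergence rate: if u^δ solves the penalised problem for each δ > 0 and
u solves the hard-constrained problem, then ‖u − u^δ‖ ≤ C√δ with C independent of δ. -/
theorem penalty_convergence_rate
    {U : Type*} [NormedAddCommGroup U] [InnerProductSpace ℝ U] [CompleteSpace U]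
    (a : U →ₗ[ℝ] U →ₗ[ℝ] ℝ)
    (M : ℝ) (hbound : ∀ u v : U, |a u v| ≤ M * ‖u‖ * ‖v‖)
    (α : ℝ) (hα : 0 < α) (hcoercive : ∀ u : U, α * ‖u‖ ^ 2 ≤ a u u)
    (hsymm : ∀ u v : U, a u v = a v u)
    (L : ℕ) (p : Fin L → U →L[ℝ] ℝ) (Z : Fin L → ℝ)
    (uδ : ℝ → U)
    (hpen : ∀ δ : ℝ, 0 < δ → ∀ v : U,
      a (uδ δ) v + (1 / δ) * ∑ j, p j (uδ δ) * p j v = (1 / δ) * ∑ j, Z j * p j v)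
    (u : U) (hu : ∀ j, p j u = Z j)
    (hhard : ∀ v : U, (∀ j, p j v = 0) → a u v = 0) :
    ∃ C > 0, ∀ δ : ℝ, 0 < δ → ‖u - uδ δ‖ ≤ C * Real.sqrt δ := by
  classical
  -- a u ∈ span of (p j) as linear functionals
  have hker : ⨅ j, LinearMap.ker ((p j : U →ₗ[ℝ] ℝ)) ≤ LinearMap.ker (a u) := by
    intro v hv
    simp only [Submodule.mem_iInf, LinearMap.mem_ker] at hv ⊢
    exact hhard v hv
  obtain ⟨c, hc⟩ := (Submodule.mem_span_range_iff_exists_fun ℝ).1 (mem_span_of_iInf_ker_le_ker hker)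
  have hcv : ∀ v : U, (∑ j, c j * p j v) = a u v := by
    intro v
    have := congrArg (fun f => f v) hc
    simpa using this
  set Λ : ℝ := Real.sqrt (∑ j, (c j) ^ 2) with hΛ
  have hΛ0 : 0 ≤ Λ := Real.sqrt_nonneg _
  refine ⟨(Λ + 1) / Real.sqrt α, by positivity, ?_⟩
  intro δ hδ
  set w := uδ δ with hw
  set e := u - w with he
  set s : ℝ := ∑ j, (p j e) ^ 2 with hs
  have hs0 : 0 ≤ s := Finset.sum_nonneg fun j _ => sq_nonneg _
  set t : ℝ := Real.sqrt s with ht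
  have ht0 : 0 ≤ t := Real.sqrt_nonneg _
  have hts : t ^ 2 = s := Real.sq_sqrt hs0
  -- a w e = (1/δ) * s
  have h1 := hpen δ hδ e
  have hawe : a w e = (1 / δ) * s := by
    have key : ∀ j : Fin L, Z j * p j e - p j w * p j e = (p j e) ^ 2 := by
      intro j
      have hpe : p j e = p j u - p j w := by simp [he]
      rw [← hu j, hpe]; ring
    have : (∑ j, Z j * p j e) - (∑ j, p j w * p j e) = s := by
      rw [← Finset.sum_sub_distrib]
      exact Finset.sum_congr rfl fun j _ => key j
    have hδ0 : (0:ℝ) < 1 / δ := by positivity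
    nlinarith [h1, this]
  -- a u e ≤ Λ * t
  have haue : a u e ≤ Λ * t := by
    rw [← hcv e]
    have hcs := Finset.sum_mul_sq_le_sq_mul_sq Finset.univ c (fun j => p j e)
    have hΛt : (Λ * t) ^ 2 = (∑ j, (c j) ^ 2) * s := by
      rw [mul_pow, hts, hΛ, Real.sq_sqrt (Finset.sum_nonneg fun j _ => sq_nonneg _)]
    have h2 : (∑ j, c j * p j e) ^ 2 ≤ (Λ * t) ^ 2 := by rw [hΛt]; exact hcs
    calc (∑ j, c j * p j e) ≤ |∑ j, c j * p j e| := le_abs_self _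
      _ = Real.sqrt ((∑ j, c j * p j e) ^ 2) := (Real.sqrt_sq_eq_abs _).symm
      _ ≤ Real.sqrt ((Λ * t) ^ 2) := Real.sqrt_le_sqrt h2
      _ = Λ * t := Real.sqrt_sq (mul_nonneg hΛ0 ht0)
  -- coercivity
  have hcoe : α * ‖e‖ ^ 2 ≤ a e e := hcoercive e
  have haee : a e e = a u e - a w e := by simp [he]
  have hmain : α * ‖e‖ ^ 2 + (1 / δ) * t ^ 2 ≤ Λ * t := by
    rw [hts]; linarith [hcoe, haee, hawe, haue]
  clear_value Λ t s w e
  -- t ≤ Λ * δ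
  have htΛ : t ≤ Λ * δ := by
    rcases eq_or_lt_of_le ht0 with h | h
    · rw [← h]; positivity
    · have h3 : (1 / δ) * t ^ 2 ≤ Λ * t := by
        linarith [hmain, mul_nonneg hα.le (sq_nonneg ‖e‖)]
      have h4 : (1 / δ) * t ≤ Λ := by
        apply le_of_mul_le_mul_right _ h
        calc (1 / δ) * t * t = (1 / δ) * t ^ 2 := by ring
          _ ≤ Λ * t := h3
      calc t = ((1 / δ) * t) * δ := by field_simp
        _ ≤ Λ * δ := mul_le_mul_of_nonneg_right h4 hδ.le
  have hne : α * ‖e‖ ^ 2 ≤ Λ ^ 2 * δ := by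
    have h5 : Λ * t ≤ Λ * (Λ * δ) := mul_le_mul_of_nonneg_left htΛ hΛ0
    have h6 : (0:ℝ) ≤ (1 / δ) * t ^ 2 := by positivity
    calc α * ‖e‖ ^ 2 ≤ Λ * t := by linarith [hmain]
      _ ≤ Λ * (Λ * δ) := h5
      _ = Λ ^ 2 * δ := by ring
  -- conclude
  have hsq : ‖e‖ ^ 2 ≤ ((Λ + 1) / Real.sqrt α * Real.sqrt δ) ^ 2 := by
    have hsa : Real.sqrt α ^ 2 = α := Real.sq_sqrt hα.le
    have hsd : Real.sqrt δ ^ 2 = δ := Real.sq_sqrt hδ.le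
    rw [mul_pow, div_pow, hsa, hsd]
    rw [div_mul_eq_mul_div, le_div_iff₀ hα]
    have h7 : Λ ^ 2 * δ ≤ (Λ + 1) ^ 2 * δ := by nlinarith [hδ.le, hΛ0]
    linarith [hne, h7]
  have h8 := Real.sqrt_le_sqrt hsq
  rwa [Real.sqrt_sq (norm_nonneg _), Real.sqrt_sq (by positivity)] at h8
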